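/- For groupoids, a functor f : X → Y has the right lifting property against all strong deformation sections if and only if f is a normal isofibration; dually, a functor i : U → V has the left lifting property against all normal isofibrations if and only if i is a strong deformation section. -/

import Mathlib

open CategoryTheory

universe u

/-- `F` is a normal isofibration: chosen lifts of morphisms with identities
lifting to identities. -/
def IsNormalIsofib {A B : Type*} [Category A] [Category B] (F : A ⥤ B) : Prop :=
  ∃ L : ∀ ⦃a : A⦄ ⦃b : B⦄, (F.obj a ⟶ b) → Σ' a' : A, a ⟶ a',
    (∀ ⦃a : A⦄ ⦃b : B⦄ (p : F.obj a ⟶ b),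
        ∃ h : F.obj (L p).1 = b, F.map (L p).2 ≫ eqToHom h = p) ∧
    (∀ a : A, L (𝟙 (F.obj a)) = ⟨a, 𝟙 a⟩)

/-- `i` is a strong deformation section. -/
def IsSDS {A B : Type*} [Category A] [Category B] (i : A ⥤ B) : Prop :=
  ∃ (r : B ⥤ A) (hr : i ⋙ r = 𝟭 A) (β : r ⋙ i ≅ 𝟭 B),
    ∀ a : A, β.hom.app (i.obj a) = eqToHom (congrArg i.obj (Functor.congr_obj hr a))

/-- Indiscrete groupoid on a type. -/
def Indisc (T : Type u) : Type u := T

instance (T : Type u) : Groupoid.{u} (Indisc T) where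
  Hom _ _ := PUnit
  id _ := ⟨⟩
  comp _ _ := ⟨⟩
  inv _ := ⟨⟩

instance (T : Type u) (a b : Indisc T) : Subsingleton (a ⟶ b) :=
  ⟨fun ⟨⟩ ⟨⟩ => rfl⟩

instance (T : Type u) [Subsingleton T] : Subsingleton (Indisc T) := ‹_›

/-- Patch lemma: mere existence of lifts gives a normal isofibration. -/
theorem isNormalIsofib_of_lifts {A B : Type*} [Category A] [Category B] (F : A ⥤ B)
    (H : ∀ ⦃a : A⦄ ⦃b : B⦄ (p : F.obj a ⟶ b),
      ∃ (a' : A) (φ : a ⟶ a') (e : F.obj a' = b), F.map φ ≫ eqToHom e = p) :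
    IsNormalIsofib F := by
  classical
  refine ⟨fun a b p =>
    if h : ∃ (e : F.obj a = b), p = eqToHom e ≫ 𝟙 b then ⟨a, 𝟙 a⟩
    else ⟨(H p).choose, (H p).choose_spec.choose⟩, ?_, ?_⟩
  · intro a b p
    beta_reduce
    by_cases h : ∃ (e : F.obj a = b), p = eqToHom e ≫ 𝟙 b
    · rw [dif_pos h]
      obtain ⟨e, he⟩ := h
      exact ⟨e, by simp [he]⟩
    · rw [dif_neg h]
      exact ⟨(H p).choose_spec.choose_spec.choose, (H p).choose_spec.choose_spec.choose_spec⟩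
  · intro a
    beta_reduce
    rw [dif_pos ⟨rfl, by simp⟩]

theorem eqToHom_sandwich {C : Type*} [Category C] {A B : C} (h1 : A = A) (h2 : B = B)
    (q : A ⟶ B) : eqToHom h1 ≫ q ≫ eqToHom h2 = q := by simp

theorem eqToHom_sandwich3 {C : Type*} [Category C] {A B B' : C} (h1 : A = A) (h2 : B = B')
    (h3 : B' = B) (q : A ⟶ B) : eqToHom h1 ≫ (q ≫ eqToHom h2) ≫ eqToHom h3 = q := by simp

theorem eqToHom_five {C : Type*} [Category C] {A B D E F G : C} (h1 : A = B) (h2 : B = D)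
    (q : D ⟶ E) (h0 : D = E) (hq : q = eqToHom h0) (h3 : E = F) (h4 : F = G) (h5 : A = G) :
    eqToHom h1 ≫ (eqToHom h2 ≫ q ≫ eqToHom h3) ≫ eqToHom h4 = eqToHom h5 := by
  subst hq; simp

theorem psigma_eqToHom {A B : Type*} [Category A] [Category B] (F : A ⥤ B)
    (L : ∀ ⦃a : A⦄ ⦃b : B⦄, (F.obj a ⟶ b) → Σ' a' : A, a ⟶ a')
    (hL : ∀ a : A, L (𝟙 (F.obj a)) = ⟨a, 𝟙 a⟩)
    {a : A} {b : B} (h : F.obj a = b) : L (eqToHom h) = ⟨a, 𝟙 a⟩ := by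
  subst h; simpa using hL a

theorem psigma_snd {A : Type*} [Category A] {c : A} (s : Σ' a' : A, c ⟶ a')
    (h : s = ⟨c, 𝟙 c⟩) : s.2 = eqToHom (congrArg PSigma.fst h).symm := by
  cases h; simp

theorem lift_main {U V X Y : Type*} [Groupoid U] [Groupoid V] [Groupoid X] [Groupoid Y]
    {i : U ⥤ V} {f : X ⥤ Y} (hi : IsSDS i) (hf : IsNormalIsofib f)
    (t : U ⥤ X) (b : V ⥤ Y) (hsq : t ⋙ f = i ⋙ b) :
    ∃ d : V ⥤ X, i ⋙ d = t ∧ d ⋙ f = b := by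
  obtain ⟨L, hL1, hL2⟩ := hf
  obtain ⟨r, hr, β, hβ⟩ := hi
  let p : ∀ v : V, f.obj (t.obj (r.obj v)) ⟶ b.obj v := fun v =>
    eqToHom (Functor.congr_obj hsq (r.obj v)) ≫ b.map (β.hom.app v)
  let σ : ∀ v : V, t.obj (r.obj v) ⟶ (L (p v)).1 := fun v => (L (p v)).2
  have hOb : ∀ v, f.obj (L (p v)).1 = b.obj v := fun v => (hL1 (p v)).choose
  have hσ : ∀ v, f.map (σ v) ≫ eqToHom (hOb v) = p v := fun v => (hL1 (p v)).choose_spec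
  let d : V ⥤ X := {
    obj := fun v => (L (p v)).1
    map := fun {v v'} φ => Groupoid.inv (σ v) ≫ t.map (r.map φ) ≫ σ v'
    map_id := fun v => by simp
    map_comp := fun φ ψ => by simp }
  -- key : value of L on images of i
  have key : ∀ a : U, L (p (i.obj a)) = ⟨t.obj (r.obj (i.obj a)), 𝟙 _⟩ := by
    intro a
    have hp : p (i.obj a) = eqToHom ((Functor.congr_obj hsq (r.obj (i.obj a))).trans
        (congrArg b.obj (congrArg i.obj (Functor.congr_obj hr a)))) := by
      simp [p, hβ a, eqToHom_map]
    rw [hp, psigma_eqToHom f L hL2]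
  refine ⟨d, ?_, ?_⟩
  · refine CategoryTheory.Functor.ext (h_obj := fun a => ?_) (h_map := fun a a' ψ => ?_)
    · show (L (p (i.obj a))).1 = t.obj a
      rw [key a]
      exact congrArg t.obj (Functor.congr_obj hr a)
    · show Groupoid.inv ((L (p (i.obj a))).2) ≫ t.map (r.map (i.map ψ)) ≫ (L (p (i.obj a'))).2 =
        eqToHom _ ≫ t.map ψ ≫ eqToHom _
      have h2 : r.map (i.map ψ) = eqToHom (Functor.congr_obj hr a) ≫ ψ ≫
          eqToHom (Functor.congr_obj hr a').symm := by
        have := Functor.congr_hom hr ψ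
        simpa using this
      rw [psigma_snd _ (key a), psigma_snd _ (key a'), h2]
      simp [eqToHom_map, Groupoid.inv_eq_inv]
  · refine CategoryTheory.Functor.ext (h_obj := fun v => hOb v) (h_map := fun v v' φ => ?_)
    show f.map (Groupoid.inv (σ v) ≫ t.map (r.map φ) ≫ σ v') =
      eqToHom _ ≫ b.map φ ≫ eqToHom _
    have hfσ : ∀ v, f.map (σ v) = p v ≫ eqToHom (hOb v).symm := by
      intro v
      rw [← cancel_mono (eqToHom (hOb v))]
      simp [hσ v]
    have hft : f.map (t.map (r.map φ)) = eqToHom (Functor.congr_obj hsq (r.obj v)) ≫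
        b.map (i.map (r.map φ)) ≫ eqToHom (Functor.congr_obj hsq (r.obj v')).symm := by
      have := Functor.congr_hom hsq (r.map φ)
      simpa using this
    have hnat : i.map (r.map φ) ≫ β.hom.app v' = β.hom.app v ≫ φ := by
      simpa using β.hom.naturality φ
    have hb : b.map (i.map (r.map φ)) ≫ b.map (β.hom.app v') = b.map (β.hom.app v) ≫ b.map φ := by
      rw [← b.map_comp, ← b.map_comp, hnat]
    simp only [Functor.map_comp, Functor.map_inv, hft, Groupoid.inv_eq_inv]
    rw [IsIso.inv_comp_eq]
    simp only [hfσ, p, Category.assoc, eqToHom_trans, eqToHom_refl, Category.comp_id,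
      Category.id_comp, eqToHom_trans_assoc]
    slice_lhs 2 3 => rw [hb]
    simp

def wiObj {C : Type*} (x y : C) : Indisc (ULift.{u} Bool) → C
  | ⟨false⟩ => x
  | ⟨true⟩ => y

def wiMap {C : Type*} [Groupoid C] {x y : C} (q : x ⟶ y) :
    ∀ s t : Indisc (ULift.{u} Bool), wiObj x y s ⟶ wiObj x y t
  | ⟨false⟩, ⟨false⟩ => 𝟙 x
  | ⟨false⟩, ⟨true⟩ => q
  | ⟨true⟩, ⟨false⟩ => Groupoid.inv q
  | ⟨true⟩, ⟨true⟩ => 𝟙 y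

def wiFunctor {C : Type*} [Groupoid C] {x y : C} (q : x ⟶ y) : Indisc (ULift.{u} Bool) ⥤ C where
  obj := wiObj x y
  map {s t} _ := wiMap q s t
  map_id s := by rcases s with ⟨_|_⟩ <;> rfl
  map_comp {s t u} _ _ := by
    rcases s with ⟨_|_⟩ <;> rcases t with ⟨_|_⟩ <;> rcases u with ⟨_|_⟩ <;> simp [wiMap, wiObj]

def ptFunctor : Indisc PUnit.{u+1} ⥤ Indisc (ULift.{u} Bool) where
  obj _ := ⟨false⟩
  map _ := ⟨⟩

def ptRetr : Indisc (ULift.{u} Bool) ⥤ Indisc PUnit.{u+1} where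
  obj _ := ⟨⟩
  map _ := ⟨⟩
  map_id _ := rfl
  map_comp _ _ := rfl

theorem ptFunctor_sds : IsSDS (ptFunctor.{u}) := by
  refine ⟨ptRetr, ?_, ?_, ?_⟩
  · exact CategoryTheory.Functor.ext (fun _ => rfl) (fun _ _ _ => Subsingleton.elim _ _)
  · exact NatIso.ofComponents (fun v => ⟨⟨⟩, ⟨⟩, rfl, rfl⟩) (fun _ => Subsingleton.elim _ _)
  · intro a; exact Subsingleton.elim _ _

theorem rlp_imp_isofib {X Y : Type u} [Groupoid.{u} X] [Groupoid.{u} Y] (f : X ⥤ Y)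
    (H : ∀ (U V : Type u) [Groupoid.{u} U] [Groupoid.{u} V] (i : U ⥤ V), IsSDS i →
      ∀ (t : U ⥤ X) (b : V ⥤ Y), t ⋙ f = i ⋙ b → ∃ d : V ⥤ X, i ⋙ d = t ∧ d ⋙ f = b) :
    IsNormalIsofib f := by
  apply isNormalIsofib_of_lifts
  intro a bb p
  let t0 : Indisc PUnit.{u+1} ⥤ X :=
    { obj := fun _ => a, map := fun _ => 𝟙 a, map_id := fun _ => rfl,
      map_comp := fun _ _ => (Category.id_comp _).symm }
  have hsq : t0 ⋙ f = ptFunctor ⋙ wiFunctor p := by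
    refine CategoryTheory.Functor.ext (fun _ => rfl) (fun s t φ => ?_)
    show f.map (t0.map φ) = _
    rw [show t0.map φ = 𝟙 a from rfl,
      show (ptFunctor ⋙ wiFunctor p).map φ = 𝟙 (f.obj a) from rfl]
    simp
    exact (f.map_id a).trans (eqToHom_sandwich _ _ _).symm
  obtain ⟨d, hd1, hd2⟩ := H _ _ ptFunctor ptFunctor_sds t0 (wiFunctor p) hsq
  let vF : Indisc (ULift.{u} Bool) := ULift.up false
  let vT : Indisc (ULift.{u} Bool) := ULift.up true
  have e0 : d.obj vF = a := Functor.congr_obj hd1 PUnit.unit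
  let m : vF ⟶ vT := PUnit.unit
  refine ⟨d.obj vT, eqToHom e0.symm ≫ d.map m,
    Functor.congr_obj hd2 vT, ?_⟩
  have hm := Functor.congr_hom hd2 m
  simp only [Functor.comp_map] at hm
  rw [Functor.map_comp, hm]
  have hw : (wiFunctor p).map m = p := rfl
  rw [hw]
  simp [eqToHom_map]
  exact eqToHom_sandwich3 _ _ _ p

section PO
variable {U V : Type u} [Groupoid.{u} U] [Groupoid.{u} V]

structure PO (i : U ⥤ V) (r : V ⥤ U) : Type u where
  pt : V
  path : i.obj (r.obj pt) ⟶ pt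

variable (i : U ⥤ V) (r : V ⥤ U)

instance : Groupoid.{u} (PO i r) where
  Hom A B := {γ : A.pt ⟶ B.pt // A.path ≫ γ = i.map (r.map γ) ≫ B.path}
  id A := ⟨𝟙 A.pt, by simp⟩
  comp {A B C} φ ψ := ⟨φ.1 ≫ ψ.1, by
    rw [← Category.assoc, φ.2, Category.assoc, ψ.2, Functor.map_comp, Functor.map_comp,
      Category.assoc]⟩
  id_comp φ := Subtype.ext (Category.id_comp _)
  comp_id φ := Subtype.ext (Category.comp_id _)
  assoc _ _ _ := Subtype.ext (Category.assoc _ _ _)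
  inv {A B} φ := ⟨Groupoid.inv φ.1, by
    simp only [Groupoid.inv_eq_inv, Functor.map_inv]
    rw [IsIso.eq_inv_comp, ← Category.assoc, ← φ.2, Category.assoc]
    simp⟩
  inv_comp φ := Subtype.ext (by simp [Groupoid.inv_eq_inv])
  comp_inv φ := Subtype.ext (by simp [Groupoid.inv_eq_inv])

def POproj : PO i r ⥤ V where
  obj := PO.pt
  map := Subtype.val
  map_id _ := rfl
  map_comp _ _ := rfl

theorem PO_path_eq {A B : PO i r} (h : A = B) :
    A.path = eqToHom (by rw [h]) ≫ B.path ≫ eqToHom (congrArg PO.pt h).symm := by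
  subst h; simp

end PO

theorem POproj_isofib {U V : Type u} [Groupoid.{u} U] [Groupoid.{u} V]
    (i : U ⥤ V) (r : V ⥤ U) : IsNormalIsofib (POproj i r) := by
  apply isNormalIsofib_of_lifts
  intro A v γ
  refine ⟨⟨v, Groupoid.inv (i.map (r.map γ)) ≫ A.path ≫ γ⟩, ⟨γ, ?_⟩, rfl, ?_⟩
  · simp [Groupoid.inv_eq_inv]
    exact (IsIso.hom_inv_id_assoc _ _).symm
  · simp [POproj]
    exact Category.comp_id γ

theorem llp_imp_sds {U V : Type u} [Groupoid.{u} U] [Groupoid.{u} V] (i : U ⥤ V)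
    (H : ∀ (X Y : Type u) [Groupoid.{u} X] [Groupoid.{u} Y] (f : X ⥤ Y), IsNormalIsofib f →
      ∀ (t : U ⥤ X) (b : V ⥤ Y), t ⋙ f = i ⋙ b → ∃ d : V ⥤ X, i ⋙ d = t ∧ d ⋙ f = b) :
    IsSDS i := by
  -- Step 1: obtain the retraction r.
  let fT : U ⥤ Indisc PUnit.{u+1} :=
    { obj := fun _ => ⟨⟩, map := fun _ => ⟨⟩, map_id := fun _ => rfl,
      map_comp := fun _ _ => rfl }
  let bT : V ⥤ Indisc PUnit.{u+1} :=
    { obj := fun _ => ⟨⟩, map := fun _ => ⟨⟩, map_id := fun _ => rfl,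
      map_comp := fun _ _ => rfl }
  have hT : IsNormalIsofib fT := by
    apply isNormalIsofib_of_lifts
    intro a b p
    exact ⟨a, 𝟙 a, Subsingleton.elim _ _, Subsingleton.elim _ _⟩
  have hsq1 : 𝟭 U ⋙ fT = i ⋙ bT := by
    refine CategoryTheory.Functor.ext (fun x => rfl) (fun x y φ => ?_)
    exact Subsingleton.elim _ _
  obtain ⟨r, hr, -⟩ := H U (Indisc PUnit.{u+1}) fT hT (𝟭 U) bT hsq1
  -- Step 2: obtain the deformation β.
  let t2 : U ⥤ PO i r :=
    { obj := fun a => ⟨i.obj a, eqToHom (congrArg i.obj (Functor.congr_obj hr a))⟩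
      map := fun {a a'} ψ => ⟨i.map ψ, by
        have h2 := Functor.congr_hom hr ψ
        simp only [Functor.comp_map, Functor.id_map] at h2
        rw [h2]
        simp [eqToHom_map]⟩
      map_id := fun a => Subtype.ext (by show i.map (𝟙 a) = 𝟙 (i.obj a); simp)
      map_comp := fun ψ ψ' => Subtype.ext
        (by show i.map (ψ ≫ ψ') = i.map ψ ≫ i.map ψ'; simp) }
  have hsq2 : t2 ⋙ POproj i r = i ⋙ 𝟭 V :=
    CategoryTheory.Functor.ext (fun _ => rfl) (fun _ _ ψ => by
      show i.map ψ = _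
      simp
      exact (eqToHom_sandwich _ _ _).symm)
  obtain ⟨d2, hA, hB⟩ := H (PO i r) V (POproj i r) (POproj_isofib i r) t2 (𝟭 V) hsq2
  have e : ∀ v : V, (d2.obj v).pt = v := fun v => Functor.congr_obj hB v
  let app : ∀ v : V, (r ⋙ i).obj v ⟶ (𝟭 V).obj v := fun v =>
    eqToHom (congrArg (fun w => i.obj (r.obj w)) (e v)).symm ≫ (d2.obj v).path ≫ eqToHom (e v)
  have hnat : ∀ {v v' : V} (γ : v ⟶ v'), (r ⋙ i).map γ ≫ app v' = app v ≫ (𝟭 V).map γ := by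
    intro v v' γ
    have hδ := (d2.map γ).2
    have hval : (d2.map γ).1 = eqToHom (e v) ≫ γ ≫ eqToHom (e v').symm := by
      have := Functor.congr_hom hB γ
      exact this
    rw [hval] at hδ
    simp only [Functor.map_comp, eqToHom_map] at hδ
    have h3 := congrArg (fun x => x ≫ eqToHom (e v')) hδ
    simp only [Category.assoc, eqToHom_trans, eqToHom_refl, Category.comp_id] at h3
    show i.map (r.map γ) ≫ app v' = app v ≫ γ
    simp only [app, Category.assoc, h3]
    simp
  refine ⟨r, hr, NatIso.ofComponents (fun v =>
    ⟨app v, Groupoid.inv (app v), Groupoid.comp_inv _, Groupoid.inv_comp _⟩)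
    (fun γ => hnat γ), ?_⟩
  intro a
  show app (i.obj a) = _
  have hA' : d2.obj (i.obj a) = t2.obj a := Functor.congr_obj hA a
  have hp := PO_path_eq i r hA'
  simp only [app, hp]
  exact eqToHom_five _ _ (t2.obj a).path (congrArg i.obj (Functor.congr_obj hr a)) rfl _ _ _

/-- a functor of groupoids has the right lifting property against
all strong deformation sections iff it is a normal isofibration; dually, a
functor has the left lifting property against all normal isofibrations iff it is
a strong deformation section. -/
theorem stmt_16 :
    (∀ (X Y : Type u) [Groupoid.{u} X] [Groupoid.{u} Y] (f : X ⥤ Y),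
       (∀ (U V : Type u) [Groupoid.{u} U] [Groupoid.{u} V] (i : U ⥤ V), IsSDS i →
          ∀ (t : U ⥤ X) (b : V ⥤ Y), t ⋙ f = i ⋙ b →
            ∃ d : V ⥤ X, i ⋙ d = t ∧ d ⋙ f = b) ↔ IsNormalIsofib f) ∧
    (∀ (U V : Type u) [Groupoid.{u} U] [Groupoid.{u} V] (i : U ⥤ V),
       (∀ (X Y : Type u) [Groupoid.{u} X] [Groupoid.{u} Y] (f : X ⥤ Y), IsNormalIsofib f →
          ∀ (t : U ⥤ X) (b : V ⥤ Y), t ⋙ f = i ⋙ b →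
            ∃ d : V ⥤ X, i ⋙ d = t ∧ d ⋙ f = b) ↔ IsSDS i) := by
  constructor
  · intro X Y _ _ f
    constructor
    · exact fun H => rlp_imp_isofib f H
    · intro hf U V _ _ i hi t b hsq
      exact lift_main hi hf t b hsq
  · intro U V _ _ i
    constructor
    · exact fun H => llp_imp_sds i H
    · intro hi X Y _ _ f hf t b hsq
      exact lift_main hi hf t b hsq
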